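/- Let F and G be polyboxes in a d-box X. Then F = G if and only if for every box C' (including improper boxes) in X, the index of F relative to C equals the index of G relative to C, where the index of a polybox F relative to C is Σ_{A ∈ F'} Π_i([A_i = C_i] − [A_i = X_i\C_i] + [C_i = X_i]) for any proper suit F' of F. -/

import Mathlib

set_option linter.unusedSectionVars false
set_option linter.unusedVariables false

open Finset Function

namespace Poly17

variable {α : Type*} [DecidableEq α]

/-- the coefficient function of the index, relative to an ambient set `Y`. -/
def hc (Y C S : Finset α) : ℤ :=
  (if S = C then 1 else 0) - (if S = Y \ C then 1 else 0) + (if C = Y then 1 else 0)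

lemma ne_sdiff_self {Y S : Finset α} (h : S.Nonempty) : S ≠ Y \ S := by
  intro e
  obtain ⟨a, ha⟩ := h
  have h2 : a ∈ Y \ S := e ▸ ha
  exact (Finset.mem_sdiff.mp h2).2 ha

lemma sdiff_eq_sdiff_iff {Y S T : Finset α} (hS : S ⊆ Y) (hT : T ⊆ Y) :
    Y \ S = Y \ T ↔ S = T := by
  constructor
  · intro h
    have h2 := congrArg (fun u => Y \ u) h
    simpa [Finset.sdiff_sdiff_eq_self hS, Finset.sdiff_sdiff_eq_self hT] using h2
  · intro h; rw [h]

lemma eq_sdiff_comm {Y S T : Finset α} (hS : S ⊆ Y) (hT : T ⊆ Y) :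
    S = Y \ T ↔ T = Y \ S := by
  constructor
  · intro h
    rw [h, Finset.sdiff_sdiff_eq_self hT]
  · intro h
    rw [h, Finset.sdiff_sdiff_eq_self hS]

lemma sdiff_singleton_eq_iff {A W : Finset α} {z : α} (hzW : z ∉ W) :
    A \ {z} = W ↔ (A = W ∨ A = insert z W) := by
  constructor
  · intro h
    by_cases hzA : z ∈ A
    · right
      rw [← h]
      rw [Finset.sdiff_singleton_eq_erase, Finset.insert_erase hzA]
    · left
      rw [← h, Finset.sdiff_singleton_eq_erase, Finset.erase_eq_of_notMem hzA]
  · rintro (rfl | rfl)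
    · rw [Finset.sdiff_singleton_eq_erase]
      exact Finset.erase_eq_of_notMem hzW
    · rw [Finset.sdiff_singleton_eq_erase, Finset.erase_insert hzW]

section System

variable {ι : Type*} [Fintype ι] [DecidableEq ι] {X : ι → Type*}
  [∀ i, Fintype (X i)] [∀ i, DecidableEq (X i)]

/-- index of a family of boxes relative to box `C` in ambient box `Y`. -/
def Ind (Y C : ∀ i, Finset (X i)) (F : Finset (∀ i, Finset (X i))) : ℤ :=
  ∑ A ∈ F, ∏ i, hc (Y i) (C i) (A i)

/-- all boxes of `F` are proper nonempty sub-boxes of `Y`. -/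
def Proper (Y : ∀ i, Finset (X i)) (F : Finset (∀ i, Finset (X i))) : Prop :=
  ∀ A ∈ F, ∀ i, A i ⊆ Y i ∧ (A i).Nonempty ∧ A i ≠ Y i

/-- any two distinct boxes of `F` are dichotomous (relative to `Y`). -/
def Dich (Y : ∀ i, Finset (X i)) (F : Finset (∀ i, Finset (X i))) : Prop :=
  ∀ A ∈ F, ∀ B ∈ F, A ≠ B → ∃ i, A i = Y i \ B i

/-- `x` is covered by the polybox determined by `F`. -/
def Cov (F : Finset (∀ i, Finset (X i))) (x : ∀ i, X i) : Prop :=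
  ∃ A ∈ F, ∀ i, x i ∈ A i

variable (Y C : ∀ i, Finset (X i)) (j : ι)

/-- the product of the index coefficients over all coordinates except `j`. -/
def phi (A : ∀ i, Finset (X i)) : ℤ :=
  ∏ i ∈ Finset.univ.erase j, hc (Y i) (C i) (A i)

/-- fiber sums. -/
def kk (F : Finset (∀ i, Finset (X i))) (S : Finset (X j)) : ℤ :=
  ∑ A ∈ F.filter (fun A => A j = S), phi Y C j A

def TT (F : Finset (∀ i, Finset (X i))) : ℤ :=
  ∑ A ∈ F, phi Y C j A

variable {Y C j}

lemma phi_update (A : ∀ i, Finset (X i)) (S : Finset (X j)) :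
    phi Y C j (Function.update A j S) = phi Y C j A := by
  refine Finset.prod_congr rfl fun i hi => ?_
  rw [Function.update_of_ne (Finset.mem_erase.mp hi).1]

lemma Ind_eq_sum (F : Finset (∀ i, Finset (X i))) :
    Ind Y C F = ∑ A ∈ F, hc (Y j) (C j) (A j) * phi Y C j A :=
  Finset.sum_congr rfl fun A _ => (Finset.mul_prod_erase Finset.univ _ (Finset.mem_univ j)).symm

lemma idc1 {F : Finset (∀ i, Finset (X i))} (hFp : Proper Y F) (hCj : C j = Y j) :
    Ind Y C F = TT Y C j F := by
  rw [Ind_eq_sum (j := j)]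
  refine Finset.sum_congr rfl fun A hA => ?_
  have h1 := hFp A hA j
  have h2 : A j ≠ C j := by rw [hCj]; exact h1.2.2
  have h3 : A j ≠ Y j \ C j := by
    rw [hCj, Finset.sdiff_self]
    exact h1.2.1.ne_empty
  rw [hc, if_neg h2, if_neg h3, if_pos hCj]
  ring

lemma idc2 {F : Finset (∀ i, Finset (X i))} (hFp : Proper Y F)
    (hCs : C j ⊆ Y j) (hCne : (C j).Nonempty) (hCY : C j ≠ Y j) :
    Ind Y C F = kk Y C j F (C j) - kk Y C j F (Y j \ C j) := by
  have hsd : C j ≠ Y j \ C j := ne_sdiff_self hCne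
  rw [Ind_eq_sum (j := j)]
  have key : ∀ A ∈ F, hc (Y j) (C j) (A j) * phi Y C j A =
      (if A j = C j then phi Y C j A else 0) + (if A j = Y j \ C j then -(phi Y C j A) else 0) := by
    intro A _
    by_cases h1 : A j = C j
    · rw [if_pos h1, if_neg (h1 ▸ hsd), hc, if_pos h1, if_neg (h1 ▸ hsd), if_neg hCY]
      ring
    · rw [if_neg h1]
      by_cases h2 : A j = Y j \ C j
      · rw [if_pos h2, hc, if_neg h1, if_pos h2, if_neg hCY]
        ring
      · rw [if_neg h2, hc, if_neg h1, if_neg h2, if_neg hCY]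
        ring
  rw [Finset.sum_congr rfl key, Finset.sum_add_distrib]
  congr 1
  · rw [kk, Finset.sum_filter]
  · rw [kk, Finset.sum_filter, ← Finset.sum_neg_distrib]
    refine Finset.sum_congr rfl fun A _ => ?_
    split <;> simp

end System


section Star

variable {ι : Type*} [Fintype ι] [DecidableEq ι] {X : ι → Type*}
  [∀ i, Fintype (X i)] [∀ i, DecidableEq (X i)]
variable {Y C : ∀ i, Finset (X i)} {j : ι} {F : Finset (∀ i, Finset (X i))}

lemma eq_offj_cases (hFp : Proper Y F) (hFd : Dich Y F) {A B : ∀ i, Finset (X i)}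
    (hA : A ∈ F) (hB : B ∈ F) (hoff : ∀ i, i ≠ j → A i = B i) :
    A = B ∨ A j = Y j \ B j := by
  by_cases h : A = B
  · exact Or.inl h
  · obtain ⟨i, hi⟩ := hFd A hA B hB h
    by_cases hij : i = j
    · subst hij; exact Or.inr hi
    · exfalso
      rw [← hoff i hij] at hi
      exact ne_sdiff_self (hFp A hA i).2.1 hi

/-- the "complementary" suit, obtained by replacing the `j`-th factor of each box by its
complement. -/
def starS (Y : ∀ i, Finset (X i)) (j : ι) (F : Finset (∀ i, Finset (X i))) :
    Finset (∀ i, Finset (X i)) :=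
  F.image (fun A => Function.update A j (Y j \ A j))

lemma mem_starS {B : ∀ i, Finset (X i)} :
    B ∈ starS Y j F ↔ ∃ A ∈ F, B = Function.update A j (Y j \ A j) := by
  simp [starS, eq_comm]

lemma starS_injOn (hFp : Proper Y F) : ∀ A ∈ F, ∀ B ∈ F,
    Function.update A j (Y j \ A j) = Function.update B j (Y j \ B j) → A = B := by
  intro A hA B hB h
  funext i
  by_cases hij : i = j
  · subst hij
    have h2 := congrFun h i
    rw [Function.update_self, Function.update_self] at h2
    exact ((sdiff_eq_sdiff_iff (hFp A hA i).1 (hFp B hB i).1).mp h2)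
  · have h2 := congrFun h i
    rwa [Function.update_of_ne hij, Function.update_of_ne hij] at h2

lemma starS_proper (hFp : Proper Y F) : Proper Y (starS Y j F) := by
  intro B hB i
  obtain ⟨A, hA, rfl⟩ := mem_starS.mp hB
  by_cases hij : i = j
  · subst hij
    rw [Function.update_self]
    obtain ⟨h1, h2, h3⟩ := hFp A hA i
    refine ⟨Finset.sdiff_subset, Finset.sdiff_nonempty.mpr fun hs => h3 (h1.antisymm hs), ?_⟩
    intro e
    obtain ⟨a, ha⟩ := h2
    have h4 : a ∈ Y i := h1 ha
    rw [← e] at h4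
    exact (Finset.mem_sdiff.mp h4).2 ha
  · rw [Function.update_of_ne hij]
    exact hFp A hA i

lemma starS_dich (hFp : Proper Y F) (hFd : Dich Y F) : Dich Y (starS Y j F) := by
  intro B1 hB1 B2 hB2 hne
  obtain ⟨A1, hA1, rfl⟩ := mem_starS.mp hB1
  obtain ⟨A2, hA2, rfl⟩ := mem_starS.mp hB2
  have hA12 : A1 ≠ A2 := fun h => hne (by rw [h])
  obtain ⟨i, hi⟩ := hFd A1 hA1 A2 hA2 hA12
  by_cases hij : i = j
  · subst hij
    refine ⟨i, ?_⟩
    rw [Function.update_self, Function.update_self, hi,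
      Finset.sdiff_sdiff_eq_self (hFp A2 hA2 i).1]
  · refine ⟨i, ?_⟩
    rw [Function.update_of_ne hij, Function.update_of_ne hij, hi]

lemma TT_starS (hFp : Proper Y F) : TT Y C j (starS Y j F) = TT Y C j F := by
  rw [TT, starS, Finset.sum_image (starS_injOn hFp)]
  exact Finset.sum_congr rfl fun A _ => phi_update A _

lemma kk_starS (hFp : Proper Y F) {S : Finset (X j)} (hS : S ⊆ Y j) :
    kk Y C j (starS Y j F) S = kk Y C j F (Y j \ S) := by
  rw [kk, starS, Finset.filter_image]
  have hinj : ∀ A ∈ F.filter (fun A => Function.update A j (Y j \ A j) j = S), ∀ B ∈ F.filter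
      (fun A => Function.update A j (Y j \ A j) j = S),
      Function.update A j (Y j \ A j) = Function.update B j (Y j \ B j) → A = B := by
    intro A hA B hB h
    exact starS_injOn hFp A (Finset.mem_filter.mp hA).1 B (Finset.mem_filter.mp hB).1 h
  rw [Finset.sum_image hinj]
  have hfe : F.filter (fun A => Function.update A j (Y j \ A j) j = S)
      = F.filter (fun A => A j = Y j \ S) := by
    refine Finset.filter_congr fun A hA => ?_
    rw [Function.update_self]
    constructor
    · intro h
      rw [← h, Finset.sdiff_sdiff_eq_self (hFp A hA j).1]
    · intro h
      rw [h, Finset.sdiff_sdiff_eq_self hS]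
  rw [hfe, kk]
  exact Finset.sum_congr rfl fun A _ => phi_update A _

lemma cov_update_iff {x : ∀ i, X i} {y : X j} :
    Cov F (Function.update x j y) ↔ ∃ A ∈ F, (∀ i, i ≠ j → x i ∈ A i) ∧ y ∈ A j := by
  constructor
  · rintro ⟨A, hA, h⟩
    refine ⟨A, hA, fun i hij => ?_, ?_⟩
    · have := h i; rwa [Function.update_of_ne hij] at this
    · have := h j; rwa [Function.update_self] at this
  · rintro ⟨A, hA, h1, h2⟩
    refine ⟨A, hA, fun i => ?_⟩
    by_cases hij : i = j
    · subst hij; rwa [Function.update_self]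
    · rw [Function.update_of_ne hij]; exact h1 i hij

lemma offj_compl (hFp : Proper Y F) (hFd : Dich Y F) {A B : ∀ i, Finset (X i)}
    (hA : A ∈ F) (hB : B ∈ F) (hAB : A ≠ B) {x : ∀ i, X i}
    (hxA : ∀ i, i ≠ j → x i ∈ A i) (hxB : ∀ i, i ≠ j → x i ∈ B i) :
    A j = Y j \ B j := by
  obtain ⟨i, hi⟩ := hFd A hA B hB hAB
  by_cases hij : i = j
  · subst hij; exact hi
  · exfalso
    have h1 := hxA i hij
    rw [hi] at h1
    exact (Finset.mem_sdiff.mp h1).2 (hxB i hij)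

lemma starS_cov (hFp : Proper Y F) (hFd : Dich Y F) (x : ∀ i, X i) :
    Cov (starS Y j F) x ↔ (x j ∈ Y j ∧ ∃ y ∈ Y j, Cov F (Function.update x j y) ∧
      (Cov F x → ∀ y' ∈ Y j, Cov F (Function.update x j y'))) := by
  constructor
  · rintro ⟨B, hB, hxB⟩
    obtain ⟨A, hA, rfl⟩ := mem_starS.mp hB
    have hoffA : ∀ i, i ≠ j → x i ∈ A i := fun i hij => by
      have := hxB i; rwa [Function.update_of_ne hij] at this
    have hxj : x j ∈ Y j \ A j := by
      have := hxB j; rwa [Function.update_self] at this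
    obtain ⟨hxjY, hxjA⟩ := Finset.mem_sdiff.mp hxj
    refine ⟨hxjY, ?_⟩
    obtain ⟨y, hy⟩ := (hFp A hA j).2.1
    refine ⟨y, (hFp A hA j).1 hy, cov_update_iff.mpr ⟨A, hA, hoffA, hy⟩, ?_⟩
    intro hx y' hy'
    obtain ⟨B0, hB0, hxB0⟩ := hx
    have hB0A : B0 ≠ A := fun e => hxjA (e ▸ hxB0 j)
    have hcomp : B0 j = Y j \ A j :=
      offj_compl hFp hFd hB0 hA hB0A (fun i _ => hxB0 i) hoffA
    by_cases hy'A : y' ∈ A j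
    · exact cov_update_iff.mpr ⟨A, hA, hoffA, hy'A⟩
    · exact cov_update_iff.mpr ⟨B0, hB0, fun i _ => hxB0 i, by
        rw [hcomp]; exact Finset.mem_sdiff.mpr ⟨hy', hy'A⟩⟩
  · rintro ⟨hxY, y, hyY, hcov, himp⟩
    obtain ⟨A, hA, hoffA, hyA⟩ := cov_update_iff.mp hcov
    by_cases hxA : x j ∈ A j
    · have hx : Cov F x := ⟨A, hA, fun i => by
        by_cases hij : i = j
        · subst hij; exact hxA
        · exact hoffA i hij⟩
      have hall := himp hx
      have hYA : ¬ Y j ⊆ A j := fun hs => (hFp A hA j).2.2 ((hFp A hA j).1.antisymm hs)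
      obtain ⟨u, hu⟩ := Finset.sdiff_nonempty.mpr hYA
      obtain ⟨hum, hunotA⟩ := Finset.mem_sdiff.mp hu
      obtain ⟨B0, hB0, hoffB0, huB0⟩ := cov_update_iff.mp (hall u hum)
      have hBA : B0 ≠ A := fun e => hunotA (e ▸ huB0)
      have hcomp : B0 j = Y j \ A j := offj_compl hFp hFd hB0 hA hBA hoffB0 hoffA
      refine ⟨Function.update B0 j (Y j \ B0 j), mem_starS.mpr ⟨B0, hB0, rfl⟩, fun i => ?_⟩
      by_cases hij : i = j
      · subst hij
        rw [Function.update_self, hcomp, Finset.sdiff_sdiff_eq_self (hFp A hA i).1]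
        exact hxA
      · rw [Function.update_of_ne hij]; exact hoffB0 i hij
    · refine ⟨Function.update A j (Y j \ A j), mem_starS.mpr ⟨A, hA, rfl⟩, fun i => ?_⟩
      by_cases hij : i = j
      · subst hij; rw [Function.update_self]; exact Finset.mem_sdiff.mpr ⟨hxY, hxA⟩
      · rw [Function.update_of_ne hij]; exact hoffA i hij

end Star


section Del

variable {ι : Type*} [Fintype ι] [DecidableEq ι] {X : ι → Type*}
  [∀ i, Fintype (X i)] [∀ i, DecidableEq (X i)]
variable {Y C : ∀ i, Finset (X i)} {j : ι} {F : Finset (∀ i, Finset (X i))}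
variable {z w : X j}

/-- ambient box of the deleted system. -/
def Ydel (Y : ∀ i, Finset (X i)) (j : ι) (z : X j) : ∀ i, Finset (X i) :=
  Function.update Y j (Y j \ {z})

/-- the suit obtained by deleting the point `z` from the `j`-th coordinate (boxes whose `j`-th
factor is the whole remaining set get split using the auxiliary point `w`). -/
def delS (Y : ∀ i, Finset (X i)) (j : ι) (z w : X j) (F : Finset (∀ i, Finset (X i))) :
    Finset (∀ i, Finset (X i)) :=
  ((F.filter fun A => A j ≠ {z} ∧ A j ≠ Y j \ {z}).image fun A =>
      Function.update A j (A j \ {z})) ∪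
  (((F.filter fun A => A j = Y j \ {z}).image fun A => Function.update A j {w}) ∪
   ((F.filter fun A => A j = Y j \ {z}).image fun A =>
      Function.update A j ((Y j \ {z}) \ {w})))

lemma Ydel_j : Ydel Y j z j = Y j \ {z} := Function.update_self _ _ _

lemma Ydel_ne {i : ι} (h : i ≠ j) : Ydel Y j z i = Y i := Function.update_of_ne h _ _

lemma mem_delS {B : ∀ i, Finset (X i)} :
    B ∈ delS Y j z w F ↔
      (∃ A ∈ F, (A j ≠ {z} ∧ A j ≠ Y j \ {z}) ∧ B = Function.update A j (A j \ {z})) ∨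
      (∃ A ∈ F, A j = Y j \ {z} ∧ B = Function.update A j {w}) ∨
      (∃ A ∈ F, A j = Y j \ {z} ∧ B = Function.update A j ((Y j \ {z}) \ {w})) := by
  simp only [delS, Finset.mem_union, Finset.mem_image, Finset.mem_filter]
  constructor
  · rintro ((⟨A, ⟨hA, h1⟩, rfl⟩) | (⟨A, ⟨hA, h1⟩, rfl⟩) | (⟨A, ⟨hA, h1⟩, rfl⟩))
    · exact Or.inl ⟨A, hA, h1, rfl⟩
    · exact Or.inr (Or.inl ⟨A, hA, h1, rfl⟩)
    · exact Or.inr (Or.inr ⟨A, hA, h1, rfl⟩)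
  · rintro ((⟨A, hA, h1, rfl⟩) | (⟨A, hA, h1, rfl⟩) | (⟨A, hA, h1, rfl⟩))
    · exact Or.inl ⟨A, ⟨hA, h1⟩, rfl⟩
    · exact Or.inr (Or.inl ⟨A, ⟨hA, h1⟩, rfl⟩)
    · exact Or.inr (Or.inr ⟨A, ⟨hA, h1⟩, rfl⟩)

lemma Yz_ne_z (hz : z ∈ Y j) : Y j \ {z} ≠ {z} := by
  intro e
  have h1 : z ∈ Y j \ {z} := by rw [e]; exact Finset.mem_singleton_self z
  exact (Finset.mem_sdiff.mp h1).2 (Finset.mem_singleton_self z)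

lemma w_ne_Yz (hw2 : ((Y j \ {z}) \ {w}).Nonempty) : ({w} : Finset (X j)) ≠ Y j \ {z} := by
  intro e
  rw [← e] at hw2
  simp at hw2

lemma sdiff_sdiff_z (hz : z ∈ Y j) : Y j \ (Y j \ {z}) = {z} :=
  Finset.sdiff_sdiff_eq_self (Finset.singleton_subset_iff.mpr hz)

/-- `j`-th factor of a kept (part-1) box stays proper after deletion. -/
lemma del1_proper (hz : z ∈ Y j) (hFp : Proper Y F) {A : ∀ i, Finset (X i)} (hA : A ∈ F)
    (h1 : A j ≠ {z}) (h2 : A j ≠ Y j \ {z}) :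
    A j \ {z} ⊆ Y j \ {z} ∧ (A j \ {z}).Nonempty ∧ A j \ {z} ≠ Y j \ {z} := by
  obtain ⟨hsub, hne, hneY⟩ := hFp A hA j
  refine ⟨Finset.sdiff_subset_sdiff hsub (le_refl _), ?_, ?_⟩
  · rw [Finset.sdiff_nonempty]
    intro hsubz
    rcases Finset.subset_singleton_iff.mp hsubz with h | h
    · exact hne.ne_empty h
    · exact h1 h
  · intro e
    rcases (sdiff_singleton_eq_iff (by
        intro h; exact (Finset.mem_sdiff.mp h).2 (Finset.mem_singleton_self z))).mp e with h | h
    · exact h2 h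
    · rw [Finset.sdiff_singleton_eq_erase, Finset.insert_erase hz] at h
      exact hneY h

lemma delS_proper (hFp : Proper Y F) (hz : z ∈ Y j) (hw : w ∈ Y j \ {z})
    (hw2 : ((Y j \ {z}) \ {w}).Nonempty) :
    Proper (Ydel Y j z) (delS Y j z w F) := by
  intro B hB i
  by_cases hij : i = j
  · subst hij
    rw [Ydel_j]
    rcases mem_delS.mp hB with ⟨A, hA, ⟨h1, h2⟩, rfl⟩ | ⟨A, hA, h1, rfl⟩ | ⟨A, hA, h1, rfl⟩
    · rw [Function.update_self]
      exact del1_proper hz hFp hA h1 h2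
    · rw [Function.update_self]
      exact ⟨Finset.singleton_subset_iff.mpr hw, Finset.singleton_nonempty w, w_ne_Yz hw2⟩
    · rw [Function.update_self]
      refine ⟨Finset.sdiff_subset, hw2, ?_⟩
      intro e
      have hwm : w ∈ (Y i \ {z}) \ {w} := by rw [e]; exact hw
      exact (Finset.mem_sdiff.mp hwm).2 (Finset.mem_singleton_self w)
  · rw [Ydel_ne hij]
    rcases mem_delS.mp hB with ⟨A, hA, _, rfl⟩ | ⟨A, hA, _, rfl⟩ | ⟨A, hA, _, rfl⟩ <;>
      (rw [Function.update_of_ne hij]; exact hFp A hA i)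

/-- part-1 boxes transform relative complements correctly. -/
lemma del_compl_j {A B : ∀ i, Finset (X i)} (h : A j = Y j \ B j) :
    A j \ {z} = (Y j \ {z}) \ (B j \ {z}) := by
  ext x
  simp only [Finset.mem_sdiff, Finset.mem_singleton, h]
  tauto

lemma delS_dich (hFp : Proper Y F) (hFd : Dich Y F) (hz : z ∈ Y j) (hw : w ∈ Y j \ {z}) :
    Dich (Ydel Y j z) (delS Y j z w F) := by
  intro B1 hB1 B2 hB2 hne
  have main : ∀ (A1 A2 : ∀ i, Finset (X i)) (S1 S2 : Finset (X j)), A1 ∈ F → A2 ∈ F →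
      B1 = Function.update A1 j S1 → B2 = Function.update A2 j S2 →
      (A1 ≠ A2) → (A1 j = Y j \ A2 j → S1 = (Y j \ {z}) \ S2) →
      ∃ i, B1 i = Ydel Y j z i \ B2 i := by
    intro A1 A2 S1 S2 hA1 hA2 e1 e2 hAne hjcase
    obtain ⟨i, hi⟩ := hFd A1 hA1 A2 hA2 hAne
    by_cases hij : i = j
    · subst hij
      refine ⟨i, ?_⟩
      rw [e1, e2, Function.update_self, Function.update_self, Ydel_j]
      exact hjcase hi
    · refine ⟨i, ?_⟩
      rw [e1, e2, Function.update_of_ne hij, Function.update_of_ne hij, Ydel_ne hij]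
      exact hi
  have hcontr21 : ∀ (A1 A2 : ∀ i, Finset (X i)), A2 ∈ F → A1 j = Y j \ {z} →
      A2 j ≠ {z} → A1 j = Y j \ A2 j → False := by
    intro A1 A2 hA2 h11 h21 h
    rw [h11] at h
    exact h21 ((sdiff_eq_sdiff_iff (Finset.singleton_subset_iff.mpr hz)
      (hFp A2 hA2 j).1).mp h).symm
  have hcontr22 : ∀ (A1 A2 : ∀ i, Finset (X i)), A1 j = Y j \ {z} → A2 j = Y j \ {z} →
      A1 j = Y j \ A2 j → False := by
    intro A1 A2 h11 h21 h
    rw [h11, h21, sdiff_sdiff_z hz] at h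
    exact Yz_ne_z hz h
  rcases mem_delS.mp hB1 with ⟨A1, hA1, ⟨h11, h12⟩, e1⟩ | ⟨A1, hA1, h11, e1⟩ |
      ⟨A1, hA1, h11, e1⟩ <;>
    rcases mem_delS.mp hB2 with ⟨A2, hA2, ⟨h21, h22⟩, e2⟩ | ⟨A2, hA2, h21, e2⟩ |
      ⟨A2, hA2, h21, e2⟩
  -- 1,1
  · refine main A1 A2 _ _ hA1 hA2 e1 e2 ?_ (fun h => del_compl_j h)
    rintro rfl; exact hne (by rw [e1, e2])
  -- 1,2
  · refine main A1 A2 _ _ hA1 hA2 e1 e2 ?_ ?_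
    · rintro rfl; rw [h21] at h12; exact h12 rfl
    · intro h; exfalso; rw [h21, sdiff_sdiff_z hz] at h; exact h11 h
  -- 1,3
  · refine main A1 A2 _ _ hA1 hA2 e1 e2 ?_ ?_
    · rintro rfl; rw [h21] at h12; exact h12 rfl
    · intro h; exfalso; rw [h21, sdiff_sdiff_z hz] at h; exact h11 h
  -- 2,1
  · refine main A1 A2 _ _ hA1 hA2 e1 e2 ?_ ?_
    · rintro rfl; rw [h11] at h22; exact h22 rfl
    · intro h; exact absurd h (fun h => hcontr21 A1 A2 hA2 h11 h21 h)
  -- 2,2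
  · refine main A1 A2 _ _ hA1 hA2 e1 e2 ?_ ?_
    · rintro rfl; exact hne (by rw [e1, e2])
    · intro h; exact absurd h (fun h => hcontr22 A1 A2 h11 h21 h)
  -- 2,3
  · by_cases hA : A1 = A2
    · refine ⟨j, ?_⟩
      rw [e1, e2, Function.update_self, Function.update_self, Ydel_j,
        Finset.sdiff_sdiff_eq_self (Finset.singleton_subset_iff.mpr hw)]
    · refine main A1 A2 _ _ hA1 hA2 e1 e2 hA ?_
      intro h; exact absurd h (fun h => hcontr22 A1 A2 h11 h21 h)
  -- 3,1
  · refine main A1 A2 _ _ hA1 hA2 e1 e2 ?_ ?_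
    · rintro rfl; rw [h11] at h22; exact h22 rfl
    · intro h; exact absurd h (fun h => hcontr21 A1 A2 hA2 h11 h21 h)
  -- 3,2
  · by_cases hA : A1 = A2
    · refine ⟨j, ?_⟩
      rw [e1, e2, Function.update_self, Function.update_self, Ydel_j]
    · refine main A1 A2 _ _ hA1 hA2 e1 e2 hA ?_
      intro h; exact absurd h (fun h => hcontr22 A1 A2 h11 h21 h)
  -- 3,3
  · refine main A1 A2 _ _ hA1 hA2 e1 e2 ?_ ?_
    · rintro rfl; exact hne (by rw [e1, e2])
    · intro h; exact absurd h (fun h => hcontr22 A1 A2 h11 h21 h)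

lemma delS_cov (hz : z ∈ Y j) (hw : w ∈ Y j \ {z}) (x : ∀ i, X i) :
    Cov (delS Y j z w F) x ↔ (Cov F x ∧ x j ≠ z) := by
  constructor
  · rintro ⟨B, hB, hxB⟩
    rcases mem_delS.mp hB with ⟨A, hA, ⟨h1, h2⟩, rfl⟩ | ⟨A, hA, h1, rfl⟩ | ⟨A, hA, h1, rfl⟩
    · have hxj := hxB j
      rw [Function.update_self] at hxj
      obtain ⟨hxA, hxz⟩ := Finset.mem_sdiff.mp hxj
      refine ⟨⟨A, hA, fun i => ?_⟩, by simpa using hxz⟩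
      by_cases hij : i = j
      · subst hij; exact hxA
      · have := hxB i; rwa [Function.update_of_ne hij] at this
    · have hxj := hxB j
      rw [Function.update_self, Finset.mem_singleton] at hxj
      refine ⟨⟨A, hA, fun i => ?_⟩, by rw [hxj]; simpa using (Finset.mem_sdiff.mp hw).2⟩
      by_cases hij : i = j
      · subst hij; rw [h1, hxj]; exact hw
      · have := hxB i; rwa [Function.update_of_ne hij] at this
    · have hxj := hxB j
      rw [Function.update_self] at hxj
      have hxj' : x j ∈ Y j \ {z} := (Finset.mem_sdiff.mp hxj).1
      refine ⟨⟨A, hA, fun i => ?_⟩, by simpa using (Finset.mem_sdiff.mp hxj').2⟩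
      by_cases hij : i = j
      · subst hij; rw [h1]; exact hxj'
      · have := hxB i; rwa [Function.update_of_ne hij] at this
  · rintro ⟨⟨A, hA, hxA⟩, hxz⟩
    by_cases h1 : A j = {z}
    · exfalso
      have hm := hxA j
      rw [h1, Finset.mem_singleton] at hm
      exact hxz hm
    · by_cases h2 : A j = Y j \ {z}
      · by_cases hxw : x j = w
        · refine ⟨Function.update A j {w}, mem_delS.mpr (Or.inr (Or.inl ⟨A, hA, h2, rfl⟩)),
            fun i => ?_⟩
          by_cases hij : i = j
          · subst hij; rw [Function.update_self, hxw]; exact Finset.mem_singleton_self w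
          · rw [Function.update_of_ne hij]; exact hxA i
        · refine ⟨Function.update A j ((Y j \ {z}) \ {w}),
            mem_delS.mpr (Or.inr (Or.inr ⟨A, hA, h2, rfl⟩)), fun i => ?_⟩
          by_cases hij : i = j
          · subst hij
            rw [Function.update_self]
            refine Finset.mem_sdiff.mpr ⟨?_, by simpa using hxw⟩
            rw [← h2]; exact hxA i
          · rw [Function.update_of_ne hij]; exact hxA i
      · refine ⟨Function.update A j (A j \ {z}),
          mem_delS.mpr (Or.inl ⟨A, hA, ⟨h1, h2⟩, rfl⟩), fun i => ?_⟩
        by_cases hij : i = j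
        · subst hij
          rw [Function.update_self]
          exact Finset.mem_sdiff.mpr ⟨hxA i, by simpa using hxz⟩
        · rw [Function.update_of_ne hij]; exact hxA i

end Del



section DelInd

variable {ι : Type*} [Fintype ι] [DecidableEq ι] {X : ι → Type*}
  [∀ i, Fintype (X i)] [∀ i, DecidableEq (X i)]
variable {Y C : ∀ i, Finset (X i)} {j : ι} {F : Finset (∀ i, Finset (X i))}
variable {z w : X j}

lemma prod_del (W : Finset (X j)) (A : ∀ i, Finset (X i)) (S : Finset (X j)) :
    ∏ i, hc (Ydel Y j z i) (Function.update C j W i) (Function.update A j S i)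
      = hc (Y j \ {z}) W S * phi Y C j A := by
  rw [← Finset.mul_prod_erase Finset.univ _ (Finset.mem_univ j)]
  congr 1
  · rw [Ydel_j, Function.update_self, Function.update_self]
  · refine Finset.prod_congr rfl fun i hi => ?_
    have hij := (Finset.mem_erase.mp hi).1
    rw [Ydel_ne hij, Function.update_of_ne hij, Function.update_of_ne hij]

lemma del_inj1 (hFp : Proper Y F) (hFd : Dich Y F) (hz : z ∈ Y j) :
    ∀ A ∈ F.filter (fun A => A j ≠ {z} ∧ A j ≠ Y j \ {z}),
    ∀ B ∈ F.filter (fun A => A j ≠ {z} ∧ A j ≠ Y j \ {z}),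
      Function.update A j (A j \ {z}) = Function.update B j (B j \ {z}) → A = B := by
  intro A hA B hB h
  have hAF := (Finset.mem_filter.mp hA).1
  have hA1 := (Finset.mem_filter.mp hA).2.1
  have hBF := (Finset.mem_filter.mp hB).1
  have hB1 := (Finset.mem_filter.mp hB).2.1
  have hoff : ∀ i, i ≠ j → A i = B i := fun i hij => by
    have := congrFun h i
    rwa [Function.update_of_ne hij, Function.update_of_ne hij] at this
  rcases eq_offj_cases hFp hFd hAF hBF hoff with he | he
  · exact he
  · exfalso
    have hj := congrFun h j
    rw [Function.update_self, Function.update_self] at hj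
    have hd : Disjoint (A j \ {z}) (B j \ {z}) := by
      refine Disjoint.mono_left (Finset.sdiff_subset.trans (le_of_eq he)) ?_
      exact Finset.sdiff_disjoint.mono_right Finset.sdiff_subset
    rw [hj] at hd
    have hBe : B j \ {z} = ∅ := (disjoint_self_iff_empty _).mp hd
    have hBs : B j ⊆ {z} := Finset.sdiff_eq_empty_iff_subset.mp hBe
    rcases Finset.subset_singleton_iff.mp hBs with h0 | h0
    · exact (hFp B hBF j).2.1.ne_empty h0
    · exact hB1 h0

lemma del_inj_const (hFp : Proper Y F) (hFd : Dich Y F) (hz : z ∈ Y j) (S : Finset (X j)) :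
    ∀ A ∈ F.filter (fun A => A j = Y j \ {z}), ∀ B ∈ F.filter (fun A => A j = Y j \ {z}),
      Function.update A j S = Function.update B j S → A = B := by
  intro A hA B hB h
  obtain ⟨hAF, hA1⟩ := Finset.mem_filter.mp hA
  obtain ⟨hBF, hB1⟩ := Finset.mem_filter.mp hB
  have hoff : ∀ i, i ≠ j → A i = B i := fun i hij => by
    have := congrFun h i
    rwa [Function.update_of_ne hij, Function.update_of_ne hij] at this
  rcases eq_offj_cases hFp hFd hAF hBF hoff with he | he
  · exact he
  · exfalso
    rw [hA1, hB1, sdiff_sdiff_z hz] at he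
    exact Yz_ne_z hz he
  
lemma del_disj_gen (hFp : Proper Y F) (hFd : Dich Y F) (hz : z ∈ Y j) (S2 : Finset (X j)) :
    Disjoint ((F.filter fun A => A j ≠ {z} ∧ A j ≠ Y j \ {z}).image fun A =>
        Function.update A j (A j \ {z}))
      ((F.filter fun A => A j = Y j \ {z}).image fun A => Function.update A j S2) := by
  rw [Finset.disjoint_left]
  rintro B hB1 hB2
  obtain ⟨A1, hA1m, e1⟩ := Finset.mem_image.mp hB1
  obtain ⟨A2, hA2m, e2⟩ := Finset.mem_image.mp hB2
  have hA1F := (Finset.mem_filter.mp hA1m).1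
  have h11 := (Finset.mem_filter.mp hA1m).2.1
  have h12 := (Finset.mem_filter.mp hA1m).2.2
  obtain ⟨hA2F, h21⟩ := Finset.mem_filter.mp hA2m
  have h := e1.trans e2.symm
  have hoff : ∀ i, i ≠ j → A1 i = A2 i := fun i hij => by
    have := congrFun h i
    rwa [Function.update_of_ne hij, Function.update_of_ne hij] at this
  rcases eq_offj_cases hFp hFd hA1F hA2F hoff with he | he
  · rw [he] at h12; exact h12 h21
  · rw [h21, sdiff_sdiff_z hz] at he; exact h11 he

lemma del_disj23 (hFp : Proper Y F) (hFd : Dich Y F) (hz : z ∈ Y j) (hw : w ∈ Y j \ {z}) :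
    Disjoint ((F.filter fun A => A j = Y j \ {z}).image fun A => Function.update A j {w})
      ((F.filter fun A => A j = Y j \ {z}).image fun A =>
        Function.update A j ((Y j \ {z}) \ {w})) := by
  rw [Finset.disjoint_left]
  rintro B hB1 hB2
  obtain ⟨A1, hA1m, e1⟩ := Finset.mem_image.mp hB1
  obtain ⟨A2, hA2m, e2⟩ := Finset.mem_image.mp hB2
  obtain ⟨hA1F, h11⟩ := Finset.mem_filter.mp hA1m
  obtain ⟨hA2F, h21⟩ := Finset.mem_filter.mp hA2m
  have h := e1.trans e2.symm
  have hj := congrFun h j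
  rw [Function.update_self, Function.update_self] at hj
  have hwm : w ∈ (Y j \ {z}) \ {w} := by rw [← hj]; exact Finset.mem_singleton_self w
  exact (Finset.mem_sdiff.mp hwm).2 (Finset.mem_singleton_self w)

lemma TT_split (hz : z ∈ Y j) :
    TT Y C j F = kk Y C j F {z} + kk Y C j F (Y j \ {z})
      + ∑ A ∈ F.filter (fun A => A j ≠ {z} ∧ A j ≠ Y j \ {z}), phi Y C j A := by
  have e1 := Finset.sum_filter_add_sum_filter_not F (fun A => A j = {z}) (phi Y C j)
  have e2 := Finset.sum_filter_add_sum_filter_not (F.filter (fun A => ¬ A j = {z}))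
    (fun A => A j = Y j \ {z}) (phi Y C j)
  rw [Finset.filter_filter, Finset.filter_filter] at e2
  have e3 : F.filter (fun A => ¬ A j = {z} ∧ A j = Y j \ {z})
      = F.filter (fun A => A j = Y j \ {z}) := by
    refine Finset.filter_congr fun A _ => ?_
    constructor
    · exact fun h => h.2
    · intro h
      exact ⟨fun h0 => Yz_ne_z hz (h.symm.trans h0), h⟩
  have e4 : F.filter (fun A => ¬ A j = {z} ∧ ¬ A j = Y j \ {z})
      = F.filter (fun A => A j ≠ {z} ∧ A j ≠ Y j \ {z}) := by
    refine Finset.filter_congr fun A _ => Iff.rfl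
  rw [e3, e4] at e2
  rw [TT, ← e1, ← e2, kk, kk]
  ring

end DelInd


section DelIndMain

variable {ι : Type*} [Fintype ι] [DecidableEq ι] {X : ι → Type*}
  [∀ i, Fintype (X i)] [∀ i, DecidableEq (X i)]
variable {Y C : ∀ i, Finset (X i)} {j : ι} {F : Finset (∀ i, Finset (X i))}
variable {z w : X j}

lemma del_Ind (hFp : Proper Y F) (hFd : Dich Y F) (hz : z ∈ Y j) (hw : w ∈ Y j \ {z})
    (hw2 : ((Y j \ {z}) \ {w}).Nonempty) (W : Finset (X j)) (hWs : W ⊆ Y j \ {z})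
    (hWne : W.Nonempty) :
    Ind (Ydel Y j z) (Function.update C j W) (delS Y j z w F) =
      if W = Y j \ {z} then TT Y C j F - kk Y C j F {z} + kk Y C j F (Y j \ {z})
      else kk Y C j F W + kk Y C j F (insert z W)
        - kk Y C j F (Y j \ insert z W) - kk Y C j F (Y j \ W) := by
  have hzW : z ∉ W := fun h => (Finset.mem_sdiff.mp (hWs h)).2 (Finset.mem_singleton_self z)
  -- split the sum over the three parts
  rw [Ind, delS, Finset.sum_union (Finset.disjoint_union_right.mpr
      ⟨del_disj_gen hFp hFd hz _, del_disj_gen hFp hFd hz _⟩),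
    Finset.sum_union (del_disj23 hFp hFd hz hw),
    Finset.sum_image (del_inj1 hFp hFd hz),
    Finset.sum_image (del_inj_const hFp hFd hz _),
    Finset.sum_image (del_inj_const hFp hFd hz _)]
  have ed1 : ∀ A ∈ F.filter (fun A => A j ≠ {z} ∧ A j ≠ Y j \ {z}),
      ∏ i, hc (Ydel Y j z i) (Function.update C j W i) (Function.update A j (A j \ {z}) i)
        = hc (Y j \ {z}) W (A j \ {z}) * phi Y C j A := fun A _ => prod_del W A _
  rw [Finset.sum_congr rfl ed1,
    Finset.sum_congr rfl (fun A (_ : A ∈ F.filter (fun A => A j = Y j \ {z})) =>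
      prod_del (z := z) W A {w}),
    Finset.sum_congr rfl (fun A (_ : A ∈ F.filter (fun A => A j = Y j \ {z})) =>
      prod_del (z := z) W A ((Y j \ {z}) \ {w}))]
  rw [← Finset.mul_sum, ← Finset.mul_sum]
  have hkk2 : ∑ A ∈ F.filter (fun A => A j = Y j \ {z}), phi Y C j A
      = kk Y C j F (Y j \ {z}) := rfl
  rw [hkk2]
  by_cases hWY : W = Y j \ {z}
  · rw [if_pos hWY]
    subst hWY
    have hc2 : hc (Y j \ {z}) (Y j \ {z}) {w} = 1 := by
      rw [hc, if_neg (w_ne_Yz hw2), Finset.sdiff_self, if_neg (Finset.singleton_ne_empty w),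
        if_pos rfl]
      ring
    have hc3 : hc (Y j \ {z}) (Y j \ {z}) ((Y j \ {z}) \ {w}) = 1 := by
      have hne1 : (Y j \ {z}) \ {w} ≠ Y j \ {z} := by
        intro e
        have hwm : w ∈ (Y j \ {z}) \ {w} := by rw [e]; exact hw
        exact (Finset.mem_sdiff.mp hwm).2 (Finset.mem_singleton_self w)
      rw [hc, if_neg hne1, Finset.sdiff_self, if_neg hw2.ne_empty, if_pos rfl]
      ring
    have hc1 : ∀ A ∈ F.filter (fun A => A j ≠ {z} ∧ A j ≠ Y j \ {z}),
        hc (Y j \ {z}) (Y j \ {z}) (A j \ {z}) * phi Y C j A = phi Y C j A := by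
      intro A hA
      have hAF := (Finset.mem_filter.mp hA).1
      have h1 := (Finset.mem_filter.mp hA).2.1
      have h2 := (Finset.mem_filter.mp hA).2.2
      obtain ⟨-, hne, hneY⟩ := del1_proper hz hFp hAF h1 h2
      rw [hc, if_neg hneY, Finset.sdiff_self, if_neg hne.ne_empty, if_pos rfl]
      ring
    rw [Finset.sum_congr rfl hc1, hc2, hc3]
    have htt := TT_split (Y := Y) (C := C) (F := F) hz
    linarith [htt]
  · rw [if_neg hWY]
    -- the two split parts cancel
    have e1 : ((Y j \ {z}) \ {w} = (Y j \ {z}) \ W) = (({w} : Finset (X j)) = W) :=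
      propext (sdiff_eq_sdiff_iff (Finset.singleton_subset_iff.mpr hw) hWs)
    have e2 : (({w} : Finset (X j)) = (Y j \ {z}) \ W) = ((Y j \ {z}) \ {w} = W) := by
      refine propext ?_
      rw [eq_sdiff_comm (Finset.singleton_subset_iff.mpr hw) hWs]
      exact eq_comm
    have hsplit : hc (Y j \ {z}) W {w} + hc (Y j \ {z}) W ((Y j \ {z}) \ {w}) = 0 := by
      rw [hc, hc]
      simp only [if_neg hWY, e1, e2]
      ring
    -- part 1
    have hc1 : ∀ A ∈ F.filter (fun A => A j ≠ {z} ∧ A j ≠ Y j \ {z}),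
        hc (Y j \ {z}) W (A j \ {z}) * phi Y C j A =
          ((if A j \ {z} = W then phi Y C j A else 0)
            - (if A j \ {z} = (Y j \ {z}) \ W then phi Y C j A else 0)) := by
      intro A _
      rw [hc, if_neg hWY]
      split_ifs <;> ring
    rw [Finset.sum_congr rfl hc1, Finset.sum_sub_distrib,
      ← Finset.sum_filter, ← Finset.sum_filter]
    -- identify the two filtered sums with fiber sums
    have hff1 : (F.filter (fun A => A j ≠ {z} ∧ A j ≠ Y j \ {z})).filter
        (fun A => A j \ {z} = W) = F.filter (fun A => A j = W ∨ A j = insert z W) := by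
      rw [Finset.filter_filter]
      refine Finset.filter_congr fun A _ => ?_
      constructor
      · rintro ⟨-, he⟩
        exact (sdiff_singleton_eq_iff hzW).mp he
      · rintro (h | h)
        · have hWz : W ≠ {z} := fun e => hzW (e ▸ Finset.mem_singleton_self z)
          refine ⟨⟨by rw [h]; exact hWz, by rw [h]; exact hWY⟩, ?_⟩
          rw [h, Finset.sdiff_singleton_eq_erase, Finset.erase_eq_of_notMem hzW]
        · obtain ⟨u, hu⟩ := hWne
          have huz : u ≠ z := fun e => hzW (e ▸ hu)
          refine ⟨⟨?_, ?_⟩, ?_⟩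
          · rw [h]
            intro e
            have : u ∈ ({z} : Finset (X j)) := e ▸ (Finset.mem_insert_of_mem hu)
            exact huz (Finset.mem_singleton.mp this)
          · rw [h]
            intro e
            have : z ∈ Y j \ {z} := e ▸ (Finset.mem_insert_self z W)
            exact (Finset.mem_sdiff.mp this).2 (Finset.mem_singleton_self z)
          · rw [h, Finset.sdiff_singleton_eq_erase, Finset.erase_insert hzW]
    have eV : (Y j \ {z}) \ W = Y j \ insert z W := by
      ext x
      simp only [Finset.mem_sdiff, Finset.mem_singleton, Finset.mem_insert]
      tauto
    have hWsY : W ⊆ Y j := hWs.trans Finset.sdiff_subset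
    have hinsY : insert z W ⊆ Y j := Finset.insert_subset hz hWsY
    have hff2 : (F.filter (fun A => A j ≠ {z} ∧ A j ≠ Y j \ {z})).filter
        (fun A => A j \ {z} = (Y j \ {z}) \ W)
        = F.filter (fun A => A j = Y j \ insert z W ∨ A j = Y j \ W) := by
      rw [Finset.filter_filter]
      refine Finset.filter_congr fun A _ => ?_
      have hzV : z ∉ (Y j \ {z}) \ W := fun h =>
        (Finset.mem_sdiff.mp (Finset.mem_sdiff.mp h).1).2 (Finset.mem_singleton_self z)
      constructor
      · rintro ⟨-, he⟩
        rcases (sdiff_singleton_eq_iff hzV).mp he with h | h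
        · left; rw [h, eV]
        · right
          rw [h, eV]
          ext x
          simp only [Finset.mem_insert, Finset.mem_sdiff, Finset.mem_singleton]
          constructor
          · rintro (rfl | ⟨h1, h2⟩)
            · exact ⟨hz, hzW⟩
            · exact ⟨h1, fun hx => h2 (Or.inr hx)⟩
          · rintro ⟨h1, h2⟩
            by_cases hxz : x = z
            · exact Or.inl hxz
            · exact Or.inr ⟨h1, fun hx => (by rcases hx with hx | hx; exact hxz hx; exact h2 hx)⟩
      · rintro (h | h)
        · refine ⟨⟨?_, ?_⟩, ?_⟩
          · rw [h]
            intro e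
            have : z ∈ Y j \ insert z W := by rw [e]; exact Finset.mem_singleton_self z
            exact (Finset.mem_sdiff.mp this).2 (Finset.mem_insert_self z W)
          · rw [h]
            intro e
            have : insert z W = {z} := (sdiff_eq_sdiff_iff hinsY
              (Finset.singleton_subset_iff.mpr hz)).mp e
            obtain ⟨u, hu⟩ := hWne
            have huz : u ≠ z := fun e0 => hzW (e0 ▸ hu)
            exact huz (Finset.mem_singleton.mp (this ▸ (Finset.mem_insert_of_mem hu)))
          · rw [h, ← eV, Finset.sdiff_singleton_eq_erase, Finset.erase_eq_of_notMem hzV]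
        · refine ⟨⟨?_, ?_⟩, ?_⟩
          · rw [h]
            intro e
            have hWY' : W = Y j \ {z} := by
              rw [← Finset.sdiff_sdiff_eq_self hWsY, e]
            exact hWY hWY'
          · rw [h]
            intro e
            have : W = {z} := (sdiff_eq_sdiff_iff hWsY
              (Finset.singleton_subset_iff.mpr hz)).mp e
            exact hzW (this ▸ Finset.mem_singleton_self z)
          · rw [h]
            ext x
            simp only [Finset.mem_sdiff, Finset.mem_singleton]
            tauto
    rw [hff1, hff2]
    -- split the disjunction filters
    have hsp1 : F.filter (fun A => A j = W ∨ A j = insert z W)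
        = F.filter (fun A => A j = W) ∪ F.filter (fun A => A j = insert z W) := by
      rw [← Finset.filter_or]
    have hd1 : Disjoint (F.filter (fun A => A j = W)) (F.filter (fun A => A j = insert z W)) := by
      rw [Finset.disjoint_left]
      intro A h1 h2
      have e1 := (Finset.mem_filter.mp h1).2
      have e2 := (Finset.mem_filter.mp h2).2
      rw [e1] at e2
      exact hzW (e2 ▸ Finset.mem_insert_self z W)
    have hsp2 : F.filter (fun A => A j = Y j \ insert z W ∨ A j = Y j \ W)
        = F.filter (fun A => A j = Y j \ insert z W) ∪ F.filter (fun A => A j = Y j \ W) := by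
      rw [← Finset.filter_or]
    have hd2 : Disjoint (F.filter (fun A => A j = Y j \ insert z W))
        (F.filter (fun A => A j = Y j \ W)) := by
      rw [Finset.disjoint_left]
      intro A h1 h2
      have e1 := (Finset.mem_filter.mp h1).2
      have e2 := (Finset.mem_filter.mp h2).2
      rw [e1] at e2
      have hiW : insert z W = W := (sdiff_eq_sdiff_iff hinsY hWsY).mp e2
      exact hzW (hiW ▸ Finset.mem_insert_self z W)
    rw [hsp1, hsp2, Finset.sum_union hd1, Finset.sum_union hd2]
    have hk1 : ∑ A ∈ F.filter (fun A => A j = W), phi Y C j A = kk Y C j F W := rfl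
    have hk2 : ∑ A ∈ F.filter (fun A => A j = insert z W), phi Y C j A
      = kk Y C j F (insert z W) := rfl
    have hk3 : ∑ A ∈ F.filter (fun A => A j = Y j \ insert z W), phi Y C j A
      = kk Y C j F (Y j \ insert z W) := rfl
    have hk4 : ∑ A ∈ F.filter (fun A => A j = Y j \ W), phi Y C j A
      = kk Y C j F (Y j \ W) := rfl
    rw [hk1, hk2, hk3, hk4]
    have h0 : hc (Y j \ {z}) W {w} * kk Y C j F (Y j \ {z})
        + hc (Y j \ {z}) W ((Y j \ {z}) \ {w}) * kk Y C j F (Y j \ {z}) = 0 := by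
      linear_combination (kk Y C j F (Y j \ {z})) * hsplit
    linarith [h0]

end DelIndMain


section Slice

variable {ι : Type*} [Fintype ι] [DecidableEq ι] {X : ι → Type*}
  [∀ i, Fintype (X i)] [∀ i, DecidableEq (X i)]
variable {Y C : ∀ i, Finset (X i)} {j : ι} {F : Finset (∀ i, Finset (X i))}

/-- the slice suit over the coordinates other than `j`. -/
def sliceS (j : ι) (y : X j) (F : Finset (∀ i, Finset (X i))) :
    Finset (∀ i' : {i : ι // i ≠ j}, Finset (X i'.1)) :=
  (F.filter (fun A => A j = {y})).image (fun A => fun i' => A i'.1)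

/-- glue a point of the sliced system with the value `y` at coordinate `j`. -/
def glue (j : ι) (y : X j) (u : ∀ i' : {i : ι // i ≠ j}, X i'.1) : ∀ i, X i :=
  fun i => if h : i = j then cast (congrArg X h.symm) y else u ⟨i, h⟩

lemma glue_j {y : X j} {u : ∀ i' : {i : ι // i ≠ j}, X i'.1} : glue j y u j = y := by
  simp [glue]

lemma glue_ne {y : X j} {u : ∀ i' : {i : ι // i ≠ j}, X i'.1} {i : ι} (h : i ≠ j) :
    glue j y u i = u ⟨i, h⟩ := by
  simp [glue, h]

lemma slice_inj {y : X j} : ∀ A ∈ F.filter (fun A => A j = {y}),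
    ∀ B ∈ F.filter (fun A => A j = {y}),
    (fun i' : {i : ι // i ≠ j} => A i'.1) = (fun i' : {i : ι // i ≠ j} => B i'.1) → A = B := by
  intro A hA B hB h
  funext i
  by_cases hij : i = j
  · subst hij
    rw [(Finset.mem_filter.mp hA).2, (Finset.mem_filter.mp hB).2]
  · exact congrFun h ⟨i, hij⟩

lemma slice_proper (hFp : Proper Y F) (y : X j) :
    Proper (fun i' : {i : ι // i ≠ j} => Y i'.1) (sliceS j y F) := by
  intro B hB i'
  obtain ⟨A, hA, rfl⟩ := Finset.mem_image.mp hB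
  exact hFp A (Finset.mem_filter.mp hA).1 i'.1

lemma slice_dich (hFp : Proper Y F) (hFd : Dich Y F) (y : X j) :
    Dich (fun i' : {i : ι // i ≠ j} => Y i'.1) (sliceS j y F) := by
  intro B1 hB1 B2 hB2 hne
  obtain ⟨A1, hA1, rfl⟩ := Finset.mem_image.mp hB1
  obtain ⟨A2, hA2, rfl⟩ := Finset.mem_image.mp hB2
  have hAne : A1 ≠ A2 := fun e => hne (by rw [e])
  obtain ⟨i, hi⟩ := hFd A1 (Finset.mem_filter.mp hA1).1 A2 (Finset.mem_filter.mp hA2).1 hAne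
  by_cases hij : i = j
  · exfalso
    subst hij
    rw [(Finset.mem_filter.mp hA1).2, (Finset.mem_filter.mp hA2).2] at hi
    have : y ∈ Y i \ {y} := by rw [← hi]; exact Finset.mem_singleton_self y
    exact (Finset.mem_sdiff.mp this).2 (Finset.mem_singleton_self y)
  · exact ⟨⟨i, hij⟩, hi⟩

lemma slice_cov {y : X j} (hsing : ∀ A ∈ F, y ∈ A j → A j = ({y} : Finset (X j)))
    (u : ∀ i' : {i : ι // i ≠ j}, X i'.1) :
    Cov (sliceS j y F) u ↔ Cov F (glue j y u) := by
  constructor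
  · rintro ⟨B, hB, hu⟩
    obtain ⟨A, hA, rfl⟩ := Finset.mem_image.mp hB
    refine ⟨A, (Finset.mem_filter.mp hA).1, fun i => ?_⟩
    by_cases hij : i = j
    · subst hij
      rw [glue_j, (Finset.mem_filter.mp hA).2]
      exact Finset.mem_singleton_self y
    · rw [glue_ne hij]
      exact hu ⟨i, hij⟩
  · rintro ⟨A, hA, hx⟩
    have hyA : y ∈ A j := by
      have := hx j
      rwa [glue_j] at this
    have hAy : A j = {y} := hsing A hA hyA
    refine ⟨fun i' => A i'.1, Finset.mem_image.mpr
      ⟨A, Finset.mem_filter.mpr ⟨hA, hAy⟩, rfl⟩, fun i' => ?_⟩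
    have := hx i'.1
    rwa [glue_ne i'.2] at this

lemma slice_Ind (y : X j) :
    Ind (fun i' : {i : ι // i ≠ j} => Y i'.1) (fun i' => C i'.1) (sliceS j y F)
      = kk Y C j F {y} := by
  rw [Ind, sliceS, Finset.sum_image slice_inj, kk]
  refine Finset.sum_congr rfl fun A _ => ?_
  rw [phi]
  exact (Finset.prod_subtype (p := fun i => i ≠ j) (Finset.univ.erase j)
    (fun i => by simp) (fun i => hc (Y i) (C i) (A i))).symm

end Slice


section Main

universe u v

variable {ι : Type u} [Fintype ι] [DecidableEq ι] {X : ι → Type v}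
  [∀ i, Fintype (X i)] [∀ i, DecidableEq (X i)]

lemma suit_empty_of_small {Y : ∀ i, Finset (X i)} {F : Finset (∀ i, Finset (X i))} {j : ι}
    (hYj : (Y j).card ≤ 1) (hFp : Proper Y F) : F = ∅ := by
  rw [Finset.eq_empty_iff_forall_notMem]
  intro A hA
  obtain ⟨hs, hne, hneY⟩ := hFp A hA j
  have h1 : 1 ≤ (A j).card := Finset.card_pos.mpr hne
  exact hneY (Finset.eq_of_subset_of_card_le hs (by omega))

lemma pair_fiber {a b : α} {S Yj : Finset α} (hab : a ≠ b) (hYj : Yj = {a, b})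
    (hs : S ⊆ Yj) (hne : S.Nonempty) (hneY : S ≠ Yj) : S = {a} ∨ S = {b} := by
  subst hYj
  by_cases ha : a ∈ S <;> by_cases hb : b ∈ S
  · exfalso
    apply hneY
    apply hs.antisymm
    intro x hx
    rcases Finset.mem_insert.mp hx with rfl | hx
    · exact ha
    · rw [Finset.mem_singleton.mp hx]; exact hb
  · left
    apply Finset.Subset.antisymm
    · intro x hx
      rcases Finset.mem_insert.mp (hs hx) with rfl | hx'
      · exact Finset.mem_singleton_self x
      · rw [Finset.mem_singleton.mp hx'] at hx; exact absurd hx hb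
    · exact Finset.singleton_subset_iff.mpr ha
  · right
    apply Finset.Subset.antisymm
    · intro x hx
      rcases Finset.mem_insert.mp (hs hx) with rfl | hx'
      · exact absurd hx ha
      · exact hx'
    · exact Finset.singleton_subset_iff.mpr hb
  · exfalso
    obtain ⟨x, hx⟩ := hne
    rcases Finset.mem_insert.mp (hs hx) with rfl | hx'
    · exact ha hx
    · rw [Finset.mem_singleton.mp hx'] at hx; exact hb hx

lemma pair_Ind_decomp {Y C : ∀ i, Finset (X i)} {j : ι} {F : Finset (∀ i, Finset (X i))}
    {a b : X j} (hab : a ≠ b)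
    (hfib : ∀ A ∈ F, A j = {a} ∨ A j = {b}) :
    Ind Y C F = hc (Y j) (C j) {a} * kk Y C j F {a} + hc (Y j) (C j) {b} * kk Y C j F {b} := by
  rw [Ind_eq_sum (j := j), ← Finset.sum_filter_add_sum_filter_not F (fun A => A j = {a})]
  congr 1
  · rw [kk, Finset.mul_sum]
    refine Finset.sum_congr rfl fun A hA => ?_
    rw [(Finset.mem_filter.mp hA).2]
  · have he : F.filter (fun A => ¬ A j = {a}) = F.filter (fun A => A j = {b}) := by
      refine Finset.filter_congr fun A hA => ?_
      constructor
      · intro h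
        rcases hfib A hA with h' | h'
        · exact absurd h' h
        · exact h'
      · intro h h'
        rw [h'] at h
        exact hab (Finset.singleton_injective h)
    rw [he, kk, Finset.mul_sum]
    refine Finset.sum_congr rfl fun A hA => ?_
    rw [(Finset.mem_filter.mp hA).2]

theorem main_forward (N : ℕ) : ∀ {ι : Type u} [Fintype ι] [DecidableEq ι]
    (X : ι → Type v) [∀ i, Fintype (X i)] [∀ i, DecidableEq (X i)],
    Fintype.card ι ≤ N → ∀ (Y : ∀ i, Finset (X i)) (F G : Finset (∀ i, Finset (X i))),
    Proper Y F → Dich Y F → Proper Y G → Dich Y G →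
    (∀ x : ∀ i, X i, Cov F x ↔ Cov G x) →
    ∀ (C : ∀ i, Finset (X i)), (∀ i, C i ⊆ Y i) → (∀ i, (C i).Nonempty) →
    Ind Y C F = Ind Y C G := by
  induction N with
  | zero =>
    intro ι _ _ X _ _ hN Y F G hFp hFd hGp hGd hU C hCs hCne
    have hemp : IsEmpty ι := Fintype.card_eq_zero_iff.mp (Nat.le_zero.mp hN)
    have hFG : F = G := by
      ext A
      have hpt : ∀ (B : ∀ i, Finset (X i)) (H : Finset (∀ i, Finset (X i))), B ∈ H →
          Cov H (fun i => hemp.elim i) := fun B H hB => ⟨B, hB, fun i => hemp.elim i⟩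
      have hsub : ∀ (B B' : ∀ i, Finset (X i)), B = B' := fun B B' =>
        funext fun i => hemp.elim i
      constructor
      · intro hA
        obtain ⟨B, hB, -⟩ := (hU _).mp (hpt A F hA)
        exact (hsub A B) ▸ hB
      · intro hA
        obtain ⟨B, hB, -⟩ := (hU _).mpr (hpt A G hA)
        exact (hsub A B) ▸ hB
    rw [hFG]
  | succ N IH =>
    intro ι _ _ X _ _ hN Y0 F0 G0 hFp0 hFd0 hGp0 hGd0 hU0 C0 hCs0 hCne0
    by_cases hNle : Fintype.card ι ≤ N
    · exact IH X hNle Y0 F0 G0 hFp0 hFd0 hGp0 hGd0 hU0 C0 hCs0 hCne0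
    have hpos : 0 < Fintype.card ι := by omega
    obtain ⟨j⟩ := Fintype.card_pos_iff.mp hpos
    suffices claim : ∀ (n : ℕ) (Y : ∀ i, Finset (X i)) (F G : Finset (∀ i, Finset (X i))),
        (Y j).card ≤ n → Proper Y F → Dich Y F → Proper Y G → Dich Y G →
        (∀ x : ∀ i, X i, Cov F x ↔ Cov G x) →
        ∀ (C : ∀ i, Finset (X i)), (∀ i, C i ⊆ Y i) → (∀ i, (C i).Nonempty) →
        Ind Y C F = Ind Y C G by
      exact claim _ Y0 F0 G0 le_rfl hFp0 hFd0 hGp0 hGd0 hU0 C0 hCs0 hCne0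
    intro n
    induction n with
    | zero =>
      intro Y F G hYn hFp hFd hGp hGd hU C hCs hCne
      rw [suit_empty_of_small (j := j) (by omega) hFp,
        suit_empty_of_small (j := j) (by omega) hGp]
    | succ n IHn =>
      intro Y F G hYn hFp hFd hGp hGd hU C hCs hCne
      by_cases hYle : (Y j).card ≤ n
      · exact IHn Y F G hYle hFp hFd hGp hGd hU C hCs hCne
      have hYcard : (Y j).card = n + 1 := by omega
      by_cases hsmall : (Y j).card ≤ 1
      · rw [suit_empty_of_small (j := j) hsmall hFp, suit_empty_of_small (j := j) hsmall hGp]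
      by_cases hYtwo : (Y j).card = 2
      -- base case: two-element `j`-th factor; slice and use the outer induction hypothesis
      · obtain ⟨a, b, hab, hYj⟩ := Finset.card_eq_two.mp hYtwo
        have hfibF : ∀ A ∈ F, A j = {a} ∨ A j = {b} := fun A hA =>
          pair_fiber hab hYj (hFp A hA j).1 (hFp A hA j).2.1 (hFp A hA j).2.2
        have hfibG : ∀ A ∈ G, A j = {a} ∨ A j = {b} := fun A hA =>
          pair_fiber hab hYj (hGp A hA j).1 (hGp A hA j).2.1 (hGp A hA j).2.2
        have hcard' : Fintype.card {i : ι // i ≠ j} ≤ N := by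
          have h1 : Fintype.card {i : ι // ¬ i = j} = Fintype.card ι - Fintype.card {i // i = j} :=
            Fintype.card_subtype_compl _
          rw [Fintype.card_subtype_eq] at h1
          have : Fintype.card {i : ι // i ≠ j} = Fintype.card {i : ι // ¬ i = j} := rfl
          omega
        have hkk : ∀ y : X j, (∀ A ∈ F, y ∈ A j → A j = ({y} : Finset (X j))) →
            (∀ A ∈ G, y ∈ A j → A j = ({y} : Finset (X j))) →
            kk Y C j F {y} = kk Y C j G {y} := by
          intro y hsF hsG
          rw [← slice_Ind (C := C) y, ← slice_Ind (C := C) y]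
          exact IH (fun i' : {i : ι // i ≠ j} => X i'.1) hcard' _ _ _
            (slice_proper hFp y) (slice_dich hFp hFd y)
            (slice_proper hGp y) (slice_dich hGp hGd y)
            (fun u => by rw [slice_cov hsF u, slice_cov hsG u]; exact hU _)
            (fun i' => C i'.1) (fun i' => hCs i'.1) (fun i' => hCne i'.1)
        have hsingF : ∀ y : X j, ∀ A ∈ F, y ∈ A j → A j = ({y} : Finset (X j)) := by
          intro y A hA hy
          rcases hfibF A hA with h | h <;> rw [h] at hy ⊢ <;>
            rw [Finset.mem_singleton.mp hy]
        have hsingG : ∀ y : X j, ∀ A ∈ G, y ∈ A j → A j = ({y} : Finset (X j)) := by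
          intro y A hA hy
          rcases hfibG A hA with h | h <;> rw [h] at hy ⊢ <;>
            rw [Finset.mem_singleton.mp hy]
        rw [pair_Ind_decomp hab hfibF, pair_Ind_decomp hab hfibG,
          hkk a (hsingF a) (hsingG a), hkk b (hsingF b) (hsingG b)]
      -- main case: at least three points in the `j`-th factor
      · have hY3 : 3 ≤ (Y j).card := by omega
        -- the deletion identities
        have key : ∀ (F G : Finset (∀ i, Finset (X i))),
            Proper Y F → Dich Y F → Proper Y G → Dich Y G →
            (∀ x : ∀ i, X i, Cov F x ↔ Cov G x) →
            ∀ (z : X j), z ∈ Y j → ∀ (W : Finset (X j)), W ⊆ Y j \ {z} → W.Nonempty →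
            (if W = Y j \ {z} then TT Y C j F - kk Y C j F {z} + kk Y C j F (Y j \ {z})
              else kk Y C j F W + kk Y C j F (insert z W)
                - kk Y C j F (Y j \ insert z W) - kk Y C j F (Y j \ W)) =
            (if W = Y j \ {z} then TT Y C j G - kk Y C j G {z} + kk Y C j G (Y j \ {z})
              else kk Y C j G W + kk Y C j G (insert z W)
                - kk Y C j G (Y j \ insert z W) - kk Y C j G (Y j \ W)) := by
          intro F G hFp hFd hGp hGd hU z hz W hWs hWne
          have hYz : (Y j \ {z}).card = n := by
            rw [Finset.card_sdiff_of_subset (Finset.singleton_subset_iff.mpr hz)]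
            simp [hYcard]
          have hYzpos : 0 < (Y j \ {z}).card := by omega
          obtain ⟨w, hw⟩ := Finset.card_pos.mp hYzpos
          have hw2 : (((Y j \ {z}) \ {w})).Nonempty := by
            rw [← Finset.card_pos, Finset.card_sdiff_of_subset (Finset.singleton_subset_iff.mpr hw)]
            simp
            omega
          rw [← del_Ind hFp hFd hz hw hw2 W hWs hWne, ← del_Ind hGp hGd hz hw hw2 W hWs hWne]
          refine IHn (Ydel Y j z) _ _ ?_ (delS_proper hFp hz hw hw2) (delS_dich hFp hFd hz hw)
            (delS_proper hGp hz hw hw2) (delS_dich hGp hGd hz hw)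
            (fun x => by rw [delS_cov hz hw x, delS_cov hz hw x]
                         exact and_congr_left fun _ => hU x)
            (Function.update C j W) (fun i => ?_) (fun i => ?_)
          · rw [Ydel_j, hYz]
          · by_cases hij : i = j
            · subst hij
              rw [Ydel_j, Function.update_self]
              exact hWs
            · rw [Ydel_ne hij, Function.update_of_ne hij]
              exact hCs i
          · by_cases hij : i = j
            · subst hij
              rw [Function.update_self]
              exact hWne
            · rw [Function.update_of_ne hij]
              exact hCne i
        -- star hypotheses
        have hUstar : ∀ x : ∀ i, X i, Cov (starS Y j F) x ↔ Cov (starS Y j G) x := by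
          intro x
          have hCov : Cov F = Cov G := funext fun p => propext (hU p)
          rw [starS_cov hFp hFd x, starS_cov hGp hGd x, hCov]
        -- E2 and E2*, for each z
        have hE2 : ∀ z ∈ Y j,
            TT Y C j F - kk Y C j F {z} + kk Y C j F (Y j \ {z})
              = TT Y C j G - kk Y C j G {z} + kk Y C j G (Y j \ {z}) := by
          intro z hz
          have hYzne : (Y j \ {z}).Nonempty := by
            rw [← Finset.card_pos, Finset.card_sdiff_of_subset (Finset.singleton_subset_iff.mpr hz)]
            simp
            omega
          have h := key F G hFp hFd hGp hGd hU z hz (Y j \ {z}) le_rfl hYzne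
          rwa [if_pos rfl, if_pos rfl] at h
        have hE2s : ∀ z ∈ Y j,
            TT Y C j F - kk Y C j F (Y j \ {z}) + kk Y C j F {z}
              = TT Y C j G - kk Y C j G (Y j \ {z}) + kk Y C j G {z} := by
          intro z hz
          have hYzne : (Y j \ {z}).Nonempty := by
            rw [← Finset.card_pos, Finset.card_sdiff_of_subset (Finset.singleton_subset_iff.mpr hz)]
            simp
            omega
          have h := key (starS Y j F) (starS Y j G) (starS_proper hFp) (starS_dich hFp hFd)
            (starS_proper hGp) (starS_dich hGp hGd) hUstar z hz (Y j \ {z}) le_rfl hYzne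
          rw [if_pos rfl, if_pos rfl, TT_starS hFp, TT_starS hGp,
            kk_starS hFp (Finset.singleton_subset_iff.mpr hz),
            kk_starS hGp (Finset.singleton_subset_iff.mpr hz),
            kk_starS hFp Finset.sdiff_subset, kk_starS hGp Finset.sdiff_subset,
            sdiff_sdiff_z hz] at h
          exact h
        have hgz : ∀ z ∈ Y j,
            kk Y C j F {z} - kk Y C j F (Y j \ {z})
              = kk Y C j G {z} - kk Y C j G (Y j \ {z}) := by
          intro z hz
          have h1 := hE2 z hz
          have h2 := hE2s z hz
          linarith
        have hTT : TT Y C j F = TT Y C j G := by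
          obtain ⟨z, hz⟩ := Finset.card_pos.mp (show 0 < (Y j).card by omega)
          have h1 := hE2 z hz
          have h2 := hE2s z hz
          linarith
        -- gamma vanishing by induction on the size of S
        have hgamma : ∀ (m : ℕ) (S : Finset (X j)), S.card ≤ m → S ⊆ Y j → S.Nonempty →
            S ≠ Y j → kk Y C j F S - kk Y C j F (Y j \ S)
              = kk Y C j G S - kk Y C j G (Y j \ S) := by
          intro m
          induction m with
          | zero =>
            intro S hSc hSs hSne hSY
            exfalso
            have := Finset.card_pos.mpr hSne
            omega
          | succ m IHm =>
            intro S hSc hSs hSne hSY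
            by_cases hS1 : S.card = 1
            · obtain ⟨z, rfl⟩ := Finset.card_eq_one.mp hS1
              exact hgz z (Finset.singleton_subset_iff.mp hSs)
            · obtain ⟨z, hzS⟩ := hSne
              have hzY : z ∈ Y j := hSs hzS
              set W := S.erase z with hW
              have hWcard : W.card = S.card - 1 := Finset.card_erase_of_mem hzS
              have hWne : W.Nonempty := by
                rw [← Finset.card_pos, hWcard]
                have := Finset.card_pos.mpr (⟨z, hzS⟩ : S.Nonempty)
                omega
              have hzW : z ∉ W := Finset.notMem_erase z S
              have hWs : W ⊆ Y j \ {z} := by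
                intro u hu
                exact Finset.mem_sdiff.mpr ⟨hSs (Finset.erase_subset z S hu),
                  by simpa using (Finset.mem_erase.mp hu).1⟩
              have hins : insert z W = S := Finset.insert_erase hzS
              have hWneY : W ≠ Y j \ {z} := by
                intro e
                apply hSY
                rw [← hins, e, Finset.sdiff_singleton_eq_erase, Finset.insert_erase hzY]
              have h := key F G hFp hFd hGp hGd hU z hzY W hWs hWne
              rw [if_neg hWneY, if_neg hWneY, hins] at h
              have hWY : W ≠ Y j := by
                intro e
                rw [e] at hzW
                exact hzW hzY
              have hprev := IHm W (by omega) (hWs.trans Finset.sdiff_subset) hWne hWY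
              linarith
        by_cases hCj : C j = Y j
        · rw [idc1 hFp hCj, idc1 hGp hCj]
          exact hTT
        · rw [idc2 hFp (hCs j) (hCne j) hCj, idc2 hGp (hCs j) (hCne j) hCj]
          exact hgamma (C j).card (C j) le_rfl (hCs j) (hCne j) hCj

end Main


section Backward

variable {α : Type*} [Fintype α] [DecidableEq α]

lemma coordSum (S : Finset α) (hne : S.Nonempty) (hSu : S ≠ Finset.univ) (x : α) :
    ∑ T : Finset α, (if x ∈ T then (1 : ℤ) else 0) *
      ((if S = T then 1 else 0) - (if S = Tᶜ then 1 else 0) + (if T = Finset.univ then 1 else 0))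
      = 2 * (if x ∈ S then 1 else 0) := by
  have hSS : S ≠ Sᶜ := by
    obtain ⟨a, ha⟩ := hne
    intro e
    have ha' : a ∈ Sᶜ := e ▸ ha
    exact (Finset.mem_compl.mp ha') ha
  have hScu : Sᶜ ≠ Finset.univ := by
    rw [Ne, Finset.compl_eq_univ_iff]
    exact hne.ne_empty
  have hsmall : ({S, Sᶜ, Finset.univ} : Finset (Finset α)) ⊆ Finset.univ := Finset.subset_univ _
  rw [← Finset.sum_subset hsmall]
  · rw [Finset.sum_insert (by simp [hSS, hSu]), Finset.sum_insert (by simp [hScu]),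
      Finset.sum_singleton]
    rw [if_pos rfl, if_neg hSS, if_neg hSu]
    have c1 : S = Sᶜᶜ := (compl_compl S).symm
    have c2 : S ≠ (Finset.univ : Finset α)ᶜ := by
      rw [compl_univ]
      exact hne.ne_empty
    rw [if_pos c1, if_neg hScu, if_pos (Finset.mem_univ x), if_neg c2, if_pos rfl]
    by_cases hx : x ∈ S
    · rw [if_pos hx, if_neg (fun h => (Finset.mem_compl.mp h) hx)]
      ring
    · rw [if_neg hx, if_pos (Finset.mem_compl.mpr hx)]
      ring
  · intro T _ hT
    simp only [Finset.mem_insert, Finset.mem_singleton, not_or] at hT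
    obtain ⟨h1, h2, h3⟩ := hT
    have e1 : S ≠ T := fun e => h1 e.symm
    have e2 : S ≠ Tᶜ := by
      intro e
      apply h2
      rw [e]
      exact (compl_compl T).symm
    rw [if_neg e1, if_neg e2, if_neg h3]
    ring

end Backward

section Assemble

lemma weight_sum {ι : Type*} [Fintype ι] [DecidableEq ι] {X : ι → Type*}
    [∀ i, Fintype (X i)] [∀ i, DecidableEq (X i)]
    (A : ∀ i, Finset (X i)) (hAp : ∀ i, (A i).Nonempty ∧ A i ≠ Finset.univ) (x : ∀ i, X i) :
    ∑ C : ∀ i, Finset (X i), (∏ i, if x i ∈ C i then (1 : ℤ) else 0) *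
      (∏ i, ((if A i = C i then (1 : ℤ) else 0) - (if A i = (C i)ᶜ then 1 else 0)
        + (if C i = Finset.univ then 1 else 0)))
      = 2 ^ (Fintype.card ι) * ∏ i, (if x i ∈ A i then (1 : ℤ) else 0) := by
  have step1 : ∀ C : ∀ i, Finset (X i), (∏ i, if x i ∈ C i then (1 : ℤ) else 0) *
      (∏ i, ((if A i = C i then (1 : ℤ) else 0) - (if A i = (C i)ᶜ then 1 else 0)
        + (if C i = Finset.univ then 1 else 0)))
      = ∏ i, ((if x i ∈ C i then (1 : ℤ) else 0) *
        ((if A i = C i then (1 : ℤ) else 0) - (if A i = (C i)ᶜ then 1 else 0)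
          + (if C i = Finset.univ then 1 else 0))) := fun C => (Finset.prod_mul_distrib).symm
  rw [Finset.sum_congr rfl (fun C _ => step1 C)]
  have step2 := Finset.prod_univ_sum (fun i => (Finset.univ : Finset (Finset (X i))))
    (fun i T => (if x i ∈ T then (1 : ℤ) else 0) *
      ((if A i = T then (1 : ℤ) else 0) - (if A i = Tᶜ then 1 else 0)
        + (if T = Finset.univ then 1 else 0)))
  rw [Fintype.piFinset_univ] at step2
  rw [← step2]
  have step3 : ∀ i, ∑ T : Finset (X i), (if x i ∈ T then (1 : ℤ) else 0) *
      ((if A i = T then (1 : ℤ) else 0) - (if A i = Tᶜ then 1 else 0)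
        + (if T = Finset.univ then 1 else 0)) = 2 * (if x i ∈ A i then 1 else 0) :=
    fun i => coordSum (A i) (hAp i).1 (hAp i).2 (x i)
  rw [Finset.prod_congr rfl (fun i _ => step3 i), Finset.prod_mul_distrib,
    Finset.prod_const, Finset.card_univ]

lemma backward {ι : Type*} [Fintype ι] [DecidableEq ι] {X : ι → Type*}
    [∀ i, Fintype (X i)] [∀ i, DecidableEq (X i)]
    (F G : Finset (∀ i, Finset (X i)))
    (hFp : ∀ A ∈ F, ∀ i, (A i).Nonempty ∧ A i ≠ Finset.univ)
    (hGp : ∀ A ∈ G, ∀ i, (A i).Nonempty ∧ A i ≠ Finset.univ)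
    (hIdx : ∀ C : ∀ i, Finset (X i), (∀ i, (C i).Nonempty) →
      (∑ A ∈ F, ∏ i, ((if A i = C i then (1 : ℤ) else 0) - (if A i = (C i)ᶜ then 1 else 0)
        + (if C i = Finset.univ then 1 else 0)))
      = (∑ A ∈ G, ∏ i, ((if A i = C i then (1 : ℤ) else 0) - (if A i = (C i)ᶜ then 1 else 0)
        + (if C i = Finset.univ then 1 else 0)))) :
    {x : ∀ i, X i | ∃ A ∈ F, ∀ i, x i ∈ A i} = {x : ∀ i, X i | ∃ A ∈ G, ∀ i, x i ∈ A i} := by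
  ext x
  simp only [Set.mem_setOf_eq]
  have key : ∀ H : Finset (∀ i, Finset (X i)),
      (∀ A ∈ H, ∀ i, (A i).Nonempty ∧ A i ≠ Finset.univ) →
      ∑ C : ∀ i, Finset (X i), (∏ i, if x i ∈ C i then (1 : ℤ) else 0) *
        (∑ A ∈ H, ∏ i, ((if A i = C i then (1 : ℤ) else 0) - (if A i = (C i)ᶜ then 1 else 0)
          + (if C i = Finset.univ then 1 else 0)))
      = 2 ^ (Fintype.card ι) * ∑ A ∈ H, (if ∀ i, x i ∈ A i then (1 : ℤ) else 0) := by
    intro H hHp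
    have e1 : ∀ C : ∀ i, Finset (X i), (∏ i, if x i ∈ C i then (1 : ℤ) else 0) *
        (∑ A ∈ H, ∏ i, ((if A i = C i then (1 : ℤ) else 0) - (if A i = (C i)ᶜ then 1 else 0)
          + (if C i = Finset.univ then 1 else 0)))
        = ∑ A ∈ H, (∏ i, if x i ∈ C i then (1 : ℤ) else 0) *
          (∏ i, ((if A i = C i then (1 : ℤ) else 0) - (if A i = (C i)ᶜ then 1 else 0)
            + (if C i = Finset.univ then 1 else 0))) := fun C => Finset.mul_sum _ _ _
    rw [Finset.sum_congr rfl (fun C _ => e1 C), Finset.sum_comm]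
    rw [Finset.sum_congr rfl (fun A hA => weight_sum A (hHp A hA) x), ← Finset.mul_sum]
    congr 1
    refine Finset.sum_congr rfl fun A _ => ?_
    rw [Finset.prod_boole]
    simp
  have hw : ∀ C : ∀ i, Finset (X i), (∏ i, if x i ∈ C i then (1 : ℤ) else 0) *
      (∑ A ∈ F, ∏ i, ((if A i = C i then (1 : ℤ) else 0) - (if A i = (C i)ᶜ then 1 else 0)
        + (if C i = Finset.univ then 1 else 0)))
      = (∏ i, if x i ∈ C i then (1 : ℤ) else 0) *
      (∑ A ∈ G, ∏ i, ((if A i = C i then (1 : ℤ) else 0) - (if A i = (C i)ᶜ then 1 else 0)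
        + (if C i = Finset.univ then 1 else 0))) := by
    intro C
    by_cases hC : ∀ i, (C i).Nonempty
    · rw [hIdx C hC]
    · push_neg at hC
      obtain ⟨i0, hi0⟩ := hC
      have hz : (∏ i, if x i ∈ C i then (1 : ℤ) else 0) = 0 := by
        refine Finset.prod_eq_zero (Finset.mem_univ i0) ?_
        rw [hi0]
        simp
      rw [hz, zero_mul, zero_mul]
  have heq := (key F hFp).symm.trans
    ((Finset.sum_congr rfl (fun C _ => hw C)).trans (key G hGp))
  have hpow : (0 : ℤ) < 2 ^ (Fintype.card ι) := by positivity
  have hcount : ∑ A ∈ F, (if ∀ i, x i ∈ A i then (1 : ℤ) else 0)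
      = ∑ A ∈ G, (if ∀ i, x i ∈ A i then (1 : ℤ) else 0) := by
    have := heq
    exact mul_left_cancel₀ (by positivity) this
  rw [Finset.sum_boole, Finset.sum_boole] at hcount
  have hcard : (F.filter (fun A => ∀ i, x i ∈ A i)).card
      = (G.filter (fun A => ∀ i, x i ∈ A i)).card := by exact_mod_cast hcount
  constructor
  · rintro ⟨A, hA, hxA⟩
    have h1 : 0 < (F.filter (fun A => ∀ i, x i ∈ A i)).card :=
      Finset.card_pos.mpr ⟨A, Finset.mem_filter.mpr ⟨hA, hxA⟩⟩
    rw [hcard] at h1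
    obtain ⟨B, hB⟩ := Finset.card_pos.mp h1
    exact ⟨B, (Finset.mem_filter.mp hB).1, (Finset.mem_filter.mp hB).2⟩
  · rintro ⟨A, hA, hxA⟩
    have h1 : 0 < (G.filter (fun A => ∀ i, x i ∈ A i)).card :=
      Finset.card_pos.mpr ⟨A, Finset.mem_filter.mpr ⟨hA, hxA⟩⟩
    rw [← hcard] at h1
    obtain ⟨B, hB⟩ := Finset.card_pos.mp h1
    exact ⟨B, (Finset.mem_filter.mp hB).1, (Finset.mem_filter.mp hB).2⟩

end Assemble

end Poly17

/-- two polyboxes `F`, `G` (given by proper suits `𝓕`, `𝓖`) are equal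
iff their indices relative to every box `C` (with nonempty factors, possibly improper)
coincide. -/
theorem stmt_17 {d : ℕ} (X : Fin d → Type*) [∀ i, Fintype (X i)] [∀ i, DecidableEq (X i)]
    (hX : ∀ i, 2 ≤ Fintype.card (X i))
    (𝓕 𝓖 : Finset (∀ i, Finset (X i)))
    (h𝓕p : ∀ A ∈ 𝓕, ∀ i, (A i).Nonempty ∧ A i ≠ Finset.univ)
    (h𝓖p : ∀ A ∈ 𝓖, ∀ i, (A i).Nonempty ∧ A i ≠ Finset.univ)
    (h𝓕d : ∀ A ∈ 𝓕, ∀ B ∈ 𝓕, A ≠ B → ∃ i, A i = (B i)ᶜ)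
    (h𝓖d : ∀ A ∈ 𝓖, ∀ B ∈ 𝓖, A ≠ B → ∃ i, A i = (B i)ᶜ) :
    ({x : ∀ i, X i | ∃ A ∈ 𝓕, ∀ i, x i ∈ A i}
        = {x : ∀ i, X i | ∃ A ∈ 𝓖, ∀ i, x i ∈ A i}) ↔
      ∀ C : ∀ i, Finset (X i), (∀ i, (C i).Nonempty) →
        (∑ A ∈ 𝓕, ∏ i,
          ((if A i = C i then (1 : ℤ) else 0) - (if A i = (C i)ᶜ then 1 else 0)
            + (if C i = Finset.univ then 1 else 0)))
        = (∑ A ∈ 𝓖, ∏ i,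
          ((if A i = C i then (1 : ℤ) else 0) - (if A i = (C i)ᶜ then 1 else 0)
            + (if C i = Finset.univ then 1 else 0))) := by
  constructor
  · intro hset C hC
    set Y : ∀ i, Finset (X i) := fun i => (Finset.univ : Finset (X i)) with hY
    have hFp' : Poly17.Proper Y 𝓕 := fun A hA i =>
      ⟨Finset.subset_univ _, (h𝓕p A hA i).1, (h𝓕p A hA i).2⟩
    have hGp' : Poly17.Proper Y 𝓖 := fun A hA i =>
      ⟨Finset.subset_univ _, (h𝓖p A hA i).1, (h𝓖p A hA i).2⟩
    have hFd' : Poly17.Dich Y 𝓕 := by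
      intro A hA B hB hne
      obtain ⟨i, hi⟩ := h𝓕d A hA B hB hne
      exact ⟨i, by rw [hi, Finset.compl_eq_univ_sdiff]⟩
    have hGd' : Poly17.Dich Y 𝓖 := by
      intro A hA B hB hne
      obtain ⟨i, hi⟩ := h𝓖d A hA B hB hne
      exact ⟨i, by rw [hi, Finset.compl_eq_univ_sdiff]⟩
    have hU : ∀ x : ∀ i, X i, Poly17.Cov 𝓕 x ↔ Poly17.Cov 𝓖 x := by
      intro x
      have := Set.ext_iff.mp hset x
      simpa [Poly17.Cov] using this
    have h := Poly17.main_forward (Fintype.card (Fin d)) X le_rfl Y 𝓕 𝓖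
      hFp' hFd' hGp' hGd' hU C (fun i => Finset.subset_univ _) hC
    simp only [Poly17.Ind, Poly17.hc, hY] at h
    simp only [Finset.compl_eq_univ_sdiff]
    exact h
  · intro hIdx
    exact Poly17.backward 𝓕 𝓖 h𝓕p h𝓖p hIdx
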